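/- Let p be a probability distribution on ℕ with mean m = ∑_{n≥0} n p(n) ∈ (0,1), and let α > 1 be such that ∑_{n≥0} n^α p(n) < ∞ and α(1−m) > p(0). Then there exist a constant λ₁ > p(0) and a constant C ≥ 0 such that for every integer x ≥ 1: x · ∑_{n=0}^∞ p(n) [ (x+n−1)^α − x^α ] ≤ −λ₁ x^α + C. That is, the Lyapunov function V(x) = x^α satisfies the drift inequality LV ≤ −λ₁ V + C with λ₁ strictly larger than p(0), the maximal absorption rate of the process. -/

import Mathlib

open Filter Topology Set

private lemma rpow_sub_rpow_le {α : ℝ} (hα : 1 < α) {a b : ℝ} (ha : 0 ≤ a) (hab : a ≤ b) :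
    b ^ α - a ^ α ≤ α * b ^ (α - 1) * (b - a) := by
  rcases eq_or_lt_of_le hab with rfl | hlt
  · simp
  · have hdiff : ∀ t : ℝ, HasDerivAt (fun s : ℝ => s ^ α) (α * t ^ (α - 1)) t :=
      fun t => Real.hasDerivAt_rpow_const (Or.inr hα.le)
    obtain ⟨c, hc, hceq⟩ := exists_hasDerivAt_eq_slope (fun s : ℝ => s ^ α)
      (fun t => α * t ^ (α - 1)) hlt
      (fun t _ => (hdiff t).continuousAt.continuousWithinAt)
      (fun t _ => hdiff t)
    have hc0 : 0 ≤ c := ha.trans hc.1.le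
    have h1 : b ^ α - a ^ α = α * c ^ (α - 1) * (b - a) := by
      rw [hceq, div_mul_cancel₀ _ (sub_ne_zero.mpr hlt.ne')]
    rw [h1]
    have h2 : c ^ (α - 1) ≤ b ^ (α - 1) :=
      Real.rpow_le_rpow hc0 hc.2.le (by linarith)
    have hα0 : (0:ℝ) ≤ α := by linarith
    have h3 := mul_le_mul_of_nonneg_right (mul_le_mul_of_nonneg_left h2 hα0)
      (sub_nonneg.mpr hab)
    linarith

private lemma tendsto_aux {α : ℝ} (hα : 1 < α) {c : ℝ} (hc : -1 ≤ c) :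
    Tendsto (fun x : ℕ => (((x : ℝ) + c) ^ α - (x : ℝ) ^ α) * (x : ℝ) ^ (1 - α))
      atTop (𝓝 (α * c)) := by
  rcases eq_or_ne c 0 with rfl | hc0
  · simpa using (tendsto_const_nhds : Tendsto (fun _ : ℕ => (0:ℝ)) atTop (𝓝 0))
  · have hderiv : HasDerivAt (fun t : ℝ => (1 + t) ^ α) α 0 := by
      have h1 : HasDerivAt (fun t : ℝ => 1 + t) 1 0 := (hasDerivAt_id 0).const_add 1
      have h2 : HasDerivAt (fun s : ℝ => s ^ α) (α * (1:ℝ) ^ (α - 1)) ((fun t : ℝ => 1 + t) 0) := by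
        simpa using Real.hasDerivAt_rpow_const (x := (1:ℝ)) (p := α) (Or.inl one_ne_zero)
      have h3 := h2.comp 0 h1
      have h4 : α * (1:ℝ) ^ (α - 1) * 1 = α := by simp
      rw [h4] at h3
      exact h3
    have hslope := hasDerivAt_iff_tendsto_slope.mp hderiv
    have hdivx : Tendsto (fun x : ℕ => c / (x:ℝ)) atTop (𝓝[≠] (0:ℝ)) := by
      rw [tendsto_nhdsWithin_iff]
      refine ⟨tendsto_const_div_atTop_nhds_zero_nat c, ?_⟩
      filter_upwards [eventually_ge_atTop 1] with x hx
      have hx0 : (x:ℝ) ≠ 0 := by positivity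
      simp only [mem_compl_iff, mem_singleton_iff]
      exact div_ne_zero hc0 hx0
    have hcomp := (hslope.comp hdivx).const_mul c
    rw [mul_comm]
    refine hcomp.congr' ?_
    filter_upwards [eventually_ge_atTop 2] with x hx
    have hx2 : (2:ℝ) ≤ x := by exact_mod_cast hx
    have hx0 : (0:ℝ) < x := by linarith
    have hxc : (0:ℝ) ≤ (x:ℝ) + c := by linarith
    have hx0' : (x:ℝ) ≠ 0 := hx0.ne'
    have e1 : (1 : ℝ) + c / x + 0 = ((x:ℝ) + c) / x := by field_simp; ring
    have e2 : (((x:ℝ) + c)/x) ^ α = ((x:ℝ)+c)^α / (x:ℝ)^α := Real.div_rpow hxc hx0.le α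
    have e3 : (x:ℝ) ^ (1 - α) = x / (x:ℝ)^α := by
      rw [Real.rpow_sub hx0, Real.rpow_one]
    have hxα : (0:ℝ) < (x:ℝ)^α := Real.rpow_pos_of_pos hx0 _
    show c * slope (fun t : ℝ => (1 + t) ^ α) 0 (c / x)
        = (((x : ℝ) + c) ^ α - (x : ℝ) ^ α) * (x : ℝ) ^ (1 - α)
    rw [slope_def_field]
    simp only [add_zero] at e1
    rw [e1, e2, e3]
    rw [show ((1:ℝ) + 0) ^ α = 1 by norm_num]
    field_simp
    have hcc : c * c⁻¹ = 1 := mul_inv_cancel₀ hc0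
    linear_combination (((x:ℝ) + c) ^ α - (x:ℝ) ^ α) * hcc
theorem galton_watson_lyapunov_drift
    (p : ℕ → ℝ) (hp : ∀ n, 0 ≤ p n) (hp1 : ∑' n, p n = 1)
    (m : ℝ) (hm : m = ∑' n : ℕ, (n : ℝ) * p n) (hm0 : 0 < m) (hm1 : m < 1)
    (α : ℝ) (hα : 1 < α)
    (hmom : Summable (fun n : ℕ => (n : ℝ) ^ α * p n))
    (hαm : p 0 < α * (1 - m)) :
    ∃ lam C : ℝ, p 0 < lam ∧ 0 ≤ C ∧
      ∀ x : ℕ, 1 ≤ x →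
        (x : ℝ) * ∑' n : ℕ, p n * (((x : ℝ) + (n : ℝ) - 1) ^ α - (x : ℝ) ^ α)
          ≤ -lam * (x : ℝ) ^ α + C := by
  -- basic summability facts
  have hα0 : (0:ℝ) < α := lt_trans zero_lt_one hα
  have hP : Summable p := by
    by_contra hns
    rw [tsum_eq_zero_of_not_summable hns] at hp1
    norm_num at hp1
  have hn_le : ∀ n : ℕ, (n : ℝ) ≤ 1 + (n : ℝ) ^ α := by
    intro n
    rcases Nat.eq_zero_or_pos n with rfl | hn
    · simp [Real.zero_rpow hα0.ne']
    · have h1 : (1:ℝ) ≤ (n:ℝ) := by exact_mod_cast hn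
      have : (n:ℝ) ^ (1:ℝ) ≤ (n:ℝ) ^ α := Real.rpow_le_rpow_of_exponent_le h1 hα.le
      rw [Real.rpow_one] at this
      have := Real.rpow_nonneg (by positivity : (0:ℝ) ≤ (n:ℝ)) α
      linarith
  have hNP : Summable (fun n : ℕ => (n : ℝ) * p n) := by
    refine Summable.of_nonneg_of_le (fun n => mul_nonneg (by positivity) (hp n))
      (fun n => ?_) (hP.add hmom)
    calc (n:ℝ) * p n ≤ (1 + (n:ℝ) ^ α) * p n :=
          mul_le_mul_of_nonneg_right (hn_le n) (hp n)
      _ = p n + (n:ℝ) ^ α * p n := by ring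
  -- the rescaled summands
  set h : ℕ → ℕ → ℝ :=
    fun x n => p n * (((x : ℝ) + (n : ℝ) - 1) ^ α - (x : ℝ) ^ α) * (x : ℝ) ^ (1 - α) with hh
  -- pointwise limits
  have hpt : ∀ n : ℕ, Filter.Tendsto (fun x : ℕ => h x n) Filter.atTop
      (nhds (p n * (α * ((n : ℝ) - 1)))) := by
    intro n
    have hc : (-1 : ℝ) ≤ (n : ℝ) - 1 := by
      have : (0:ℝ) ≤ (n:ℝ) := by positivity
      linarith
    have := (tendsto_aux hα hc).const_mul (p n)
    refine this.congr fun x => ?_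
    simp only [hh]
    ring_nf
  -- the bound
  have hbound_sum : Summable (fun n : ℕ => α * ((n : ℝ) + 1) ^ α * p n) := by
    refine Summable.of_nonneg_of_le
      (fun n => mul_nonneg (mul_nonneg hα0.le (Real.rpow_nonneg (by positivity) _)) (hp n))
      (fun n => ?_) (((hP.add hmom).mul_left (α * 2 ^ α)))
    have h2 : ((n : ℝ) + 1) ^ α ≤ 2 ^ α * (1 + (n : ℝ) ^ α) := by
      rcases Nat.eq_zero_or_pos n with rfl | hn
      · simp only [Nat.cast_zero, zero_add, Real.one_rpow, Real.zero_rpow hα0.ne']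
        have h1 : (1:ℝ) ≤ (2:ℝ) ^ α := Real.one_le_rpow (by norm_num) (by linarith)
        linarith
      · have h1 : (1:ℝ) ≤ (n:ℝ) := by exact_mod_cast hn
        have h3 : ((n:ℝ) + 1) ^ α ≤ (2 * n : ℝ) ^ α :=
          Real.rpow_le_rpow (by positivity) (by linarith) (by linarith)
        rw [Real.mul_rpow (by norm_num) (by positivity)] at h3
        have h4 : (0:ℝ) ≤ (n:ℝ) ^ α := Real.rpow_nonneg (by positivity) α
        have h5 : (0:ℝ) < (2:ℝ) ^ α := Real.rpow_pos_of_pos (by norm_num) α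
        nlinarith
    calc α * ((n : ℝ) + 1) ^ α * p n
        ≤ α * (2 ^ α * (1 + (n : ℝ) ^ α)) * p n := by
          have hα0 : (0:ℝ) ≤ α := by linarith
          have := mul_le_mul_of_nonneg_left h2 hα0
          exact mul_le_mul_of_nonneg_right this (hp n)
      _ = α * 2 ^ α * (p n + (n : ℝ) ^ α * p n) := by ring
  have hbd : ∀ᶠ x : ℕ in Filter.atTop, ∀ n : ℕ,
      ‖h x n‖ ≤ α * ((n : ℝ) + 1) ^ α * p n := by
    filter_upwards [Filter.eventually_ge_atTop 1] with x hx
    intro n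
    have hx1 : (1:ℝ) ≤ (x:ℝ) := by exact_mod_cast hx
    have hx0 : (0:ℝ) < (x:ℝ) := by linarith
    have hn0 : (0:ℝ) < (n:ℝ) + 1 := by positivity
    -- step 1 : bound on the difference
    have step1 : |((x : ℝ) + (n : ℝ) - 1) ^ α - (x : ℝ) ^ α|
        ≤ α * ((x : ℝ) + (n : ℝ)) ^ (α - 1) * ((n : ℝ) + 1) := by
      rcases Nat.eq_zero_or_pos n with rfl | hn
      · simp only [Nat.cast_zero, add_zero, zero_add, mul_one]
        have hd : ((x:ℝ) - 1) ^ α - (x:ℝ) ^ α ≤ 0 := by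
          have := Real.rpow_le_rpow (by linarith) (by linarith : (x:ℝ) - 1 ≤ (x:ℝ)) (by linarith : (0:ℝ) ≤ α)
          linarith
        rw [abs_of_nonpos hd]
        have := rpow_sub_rpow_le hα (by linarith : (0:ℝ) ≤ (x:ℝ) - 1) (by linarith : (x:ℝ) - 1 ≤ (x:ℝ))
        have he : (x:ℝ) - ((x:ℝ) - 1) = 1 := by ring
        rw [he, mul_one] at this
        linarith
      · have hn1 : (1:ℝ) ≤ (n:ℝ) := by exact_mod_cast hn
        have hxn : (x:ℝ) ≤ (x:ℝ) + (n:ℝ) - 1 := by linarith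
        have hd : (0:ℝ) ≤ ((x : ℝ) + (n : ℝ) - 1) ^ α - (x : ℝ) ^ α := by
          have := Real.rpow_le_rpow (by linarith) hxn (by linarith : (0:ℝ) ≤ α)
          linarith
        rw [abs_of_nonneg hd]
        have h1 := rpow_sub_rpow_le hα (by linarith : (0:ℝ) ≤ (x:ℝ)) hxn
        have he : (x:ℝ) + (n:ℝ) - 1 - (x:ℝ) = (n:ℝ) - 1 := by ring
        rw [he] at h1
        have h2 : ((x:ℝ) + (n:ℝ) - 1) ^ (α - 1) ≤ ((x:ℝ) + (n:ℝ)) ^ (α - 1) :=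
          Real.rpow_le_rpow (by linarith) (by linarith) (by linarith)
        have h3 : (0:ℝ) ≤ ((x:ℝ) + (n:ℝ)) ^ (α - 1) := Real.rpow_nonneg (by linarith) _
        have h4 : (0:ℝ) ≤ ((x:ℝ) + (n:ℝ) - 1) ^ (α - 1) := Real.rpow_nonneg (by linarith) _
        nlinarith [mul_le_mul_of_nonneg_right (mul_le_mul_of_nonneg_left h2
            (by linarith : (0:ℝ) ≤ α)) (by linarith : (0:ℝ) ≤ (n:ℝ) - 1),
          mul_le_mul_of_nonneg_left (by linarith : (n:ℝ) - 1 ≤ (n:ℝ) + 1)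
            (mul_nonneg (by linarith : (0:ℝ) ≤ α) h3)]
    -- step 2 : split the base
    have step2 : ((x : ℝ) + (n : ℝ)) ^ (α - 1)
        ≤ (x : ℝ) ^ (α - 1) * ((n : ℝ) + 1) ^ (α - 1) := by
      have hle : (x:ℝ) + (n:ℝ) ≤ (x:ℝ) * ((n:ℝ) + 1) := by nlinarith
      calc ((x : ℝ) + (n : ℝ)) ^ (α - 1)
          ≤ ((x:ℝ) * ((n:ℝ) + 1)) ^ (α - 1) :=
            Real.rpow_le_rpow (by positivity) hle (by linarith)
        _ = (x : ℝ) ^ (α - 1) * ((n : ℝ) + 1) ^ (α - 1) :=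
            Real.mul_rpow hx0.le hn0.le
    -- combine
    have hxe : (0:ℝ) ≤ (x:ℝ) ^ (1 - α) := Real.rpow_nonneg hx0.le _
    have hnorm : ‖h x n‖ = p n * |((x : ℝ) + (n : ℝ) - 1) ^ α - (x : ℝ) ^ α| * (x : ℝ) ^ (1 - α) := by
      simp only [hh, Real.norm_eq_abs, abs_mul, abs_of_nonneg (hp n), abs_of_nonneg hxe]
    rw [hnorm]
    have hAB : (x:ℝ) ^ (α - 1) * (x:ℝ) ^ (1 - α) = 1 := by
      rw [← Real.rpow_add hx0]
      norm_num
    have hE : ((n:ℝ) + 1) ^ (α - 1) * ((n:ℝ) + 1) = ((n:ℝ) + 1) ^ α := by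
      nth_rewrite 2 [← Real.rpow_one ((n:ℝ) + 1)]
      rw [← Real.rpow_add hn0]
      norm_num
    have key : p n * (α * ((x:ℝ) ^ (α - 1) * ((n:ℝ) + 1) ^ (α - 1)) * ((n : ℝ) + 1)) * (x : ℝ) ^ (1 - α)
        = α * ((n : ℝ) + 1) ^ α * p n := by
      calc p n * (α * ((x:ℝ) ^ (α - 1) * ((n:ℝ) + 1) ^ (α - 1)) * ((n : ℝ) + 1)) * (x : ℝ) ^ (1 - α)
          = α * (((n:ℝ) + 1) ^ (α - 1) * ((n:ℝ) + 1)) * p n * ((x:ℝ) ^ (α - 1) * (x:ℝ) ^ (1 - α)) := by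
            ring
        _ = α * ((n : ℝ) + 1) ^ α * p n := by rw [hE, hAB, mul_one]
    have hstep : |((x : ℝ) + (n : ℝ) - 1) ^ α - (x : ℝ) ^ α|
        ≤ α * ((x:ℝ) ^ (α - 1) * ((n:ℝ) + 1) ^ (α - 1)) * ((n : ℝ) + 1) := by
      refine step1.trans ?_
      have hα0 : (0:ℝ) ≤ α := by linarith
      exact mul_le_mul_of_nonneg_right (mul_le_mul_of_nonneg_left step2 hα0) hn0.le
    calc p n * |((x : ℝ) + (n : ℝ) - 1) ^ α - (x : ℝ) ^ α| * (x : ℝ) ^ (1 - α)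
        ≤ p n * (α * ((x:ℝ) ^ (α - 1) * ((n:ℝ) + 1) ^ (α - 1)) * ((n : ℝ) + 1)) * (x : ℝ) ^ (1 - α) :=
          mul_le_mul_of_nonneg_right (mul_le_mul_of_nonneg_left hstep (hp n)) hxe
      _ = α * ((n : ℝ) + 1) ^ α * p n := key
  -- value of the limit sum
  have hsum_lim : ∑' n : ℕ, p n * (α * ((n : ℝ) - 1)) = α * (m - 1) := by
    have h1 : ∀ n : ℕ, p n * (α * ((n : ℝ) - 1)) = α * ((n:ℝ) * p n) - α * p n :=
      fun n => by ring
    rw [tsum_congr h1, Summable.tsum_sub (hNP.mul_left α) (hP.mul_left α),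
      tsum_mul_left, tsum_mul_left, hp1, ← hm]
    ring
  -- dominated convergence
  have hH : Filter.Tendsto (fun x : ℕ => ∑' n : ℕ, h x n) Filter.atTop
      (nhds (α * (m - 1))) := by
    have := tendsto_tsum_of_dominated_convergence hbound_sum hpt hbd
    rwa [hsum_lim] at this
  -- choose lam
  set lam : ℝ := (p 0 + α * (1 - m)) / 2 with hlam
  have hlam1 : p 0 < lam := by rw [hlam]; linarith
  have hlam2 : α * (m - 1) < -lam := by rw [hlam]; linarith
  obtain ⟨N, hN⟩ := Filter.eventually_atTop.mp (hH.eventually_le_const hlam2)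
  -- key identity
  have hkey : ∀ x : ℕ, 1 ≤ x →
      (x : ℝ) * ∑' n : ℕ, p n * (((x : ℝ) + (n : ℝ) - 1) ^ α - (x : ℝ) ^ α)
        = (x : ℝ) ^ α * ∑' n : ℕ, h x n := by
    intro x hx
    have hx0 : (0:ℝ) < (x:ℝ) := by exact_mod_cast hx
    have ht : ∑' n : ℕ, h x n
        = (∑' n : ℕ, p n * (((x : ℝ) + (n : ℝ) - 1) ^ α - (x : ℝ) ^ α)) * (x:ℝ) ^ (1 - α) :=
      tsum_mul_right
    rw [ht]
    have : (x:ℝ) ^ α * (x:ℝ) ^ (1 - α) = (x:ℝ) := by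
      rw [← Real.rpow_add hx0]
      norm_num
    calc (x : ℝ) * ∑' n : ℕ, p n * (((x : ℝ) + (n : ℝ) - 1) ^ α - (x : ℝ) ^ α)
        = ((x:ℝ) ^ α * (x:ℝ) ^ (1 - α)) * ∑' n : ℕ, p n * (((x : ℝ) + (n : ℝ) - 1) ^ α - (x : ℝ) ^ α) := by
          rw [this]
      _ = (x : ℝ) ^ α * ((∑' n : ℕ, p n * (((x : ℝ) + (n : ℝ) - 1) ^ α - (x : ℝ) ^ α)) * (x:ℝ) ^ (1 - α)) := by
          ring
  -- the constant
  set C : ℝ := ∑ y ∈ Finset.range (N + 1),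
    |(y : ℝ) * (∑' n : ℕ, p n * (((y : ℝ) + (n : ℝ) - 1) ^ α - (y : ℝ) ^ α)) + lam * (y : ℝ) ^ α| with hC
  have hC0 : 0 ≤ C := by
    rw [hC]
    exact Finset.sum_nonneg fun y _ => abs_nonneg _
  refine ⟨lam, C, hlam1, hC0, ?_⟩
  intro x hx
  rcases le_or_gt N x with hNx | hxN
  · -- large x : the drift inequality holds with C = 0
    have h1 := hN x hNx
    have hx0 : (0:ℝ) ≤ (x:ℝ) ^ α := Real.rpow_nonneg (by positivity) _
    have h2 : (x : ℝ) ^ α * ∑' n : ℕ, h x n ≤ (x : ℝ) ^ α * (-lam) :=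
      mul_le_mul_of_nonneg_left h1 hx0
    rw [hkey x hx]
    nlinarith
  · -- small x : absorb into the constant
    have hmem : x ∈ Finset.range (N + 1) := Finset.mem_range.mpr (by omega)
    have h1 : |(x : ℝ) * (∑' n : ℕ, p n * (((x : ℝ) + (n : ℝ) - 1) ^ α - (x : ℝ) ^ α)) + lam * (x : ℝ) ^ α| ≤ C := by
      rw [hC]
      exact Finset.single_le_sum
        (f := fun y : ℕ => |(y : ℝ) * (∑' n : ℕ, p n * (((y : ℝ) + (n : ℝ) - 1) ^ α - (y : ℝ) ^ α))
          + lam * (y : ℝ) ^ α|)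
        (fun y _ => abs_nonneg _) hmem
    have h2 := le_abs_self ((x : ℝ) * (∑' n : ℕ, p n * (((x : ℝ) + (n : ℝ) - 1) ^ α - (x : ℝ) ^ α)) + lam * (x : ℝ) ^ α)
    linarith
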